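/- If T is uniformly distributed on the unit sphere S^(n−1) ⊆ ℝⁿ and η ~ Beta(n/2, 2) is independent of T, then the random variable ε = √((n+4)η)·T has density equal to the Epanechnikov kernel 𝓔(x) = ((n+2)/(2 c_n (n+4)^((n+2)/2)))·(n+4 − ‖x‖²) on {‖x‖² < n+4}. -/

import Mathlib

open MeasureTheory Real

/-- Volume of the unit ball in `ℝⁿ`: `c_n = π^(n/2) / Γ(n/2 + 1)`. -/
noncomputable def unitBallVol (n : ℕ) : ℝ :=
  Real.pi ^ ((n : ℝ) / 2) / Real.Gamma ((n : ℝ) / 2 + 1)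

/-- The Epanechnikov kernel on `ℝⁿ`. -/
noncomputable def epan (n : ℕ) (x : EuclideanSpace ℝ (Fin n)) : ℝ :=
  if ‖x‖ ^ 2 < (n : ℝ) + 4 then
    (((n : ℝ) + 2) / (2 * unitBallVol n * ((n : ℝ) + 4) ^ (((n : ℝ) + 2) / 2)))
      * ((n : ℝ) + 4 - ‖x‖ ^ 2)
  else 0

/-- The uniform probability distribution on the unit sphere of `ℝⁿ`, as a measure on `ℝⁿ`. -/
noncomputable def sphereUniform (n : ℕ) : Measure (EuclideanSpace ℝ (Fin n)) :=
  Measure.map Subtype.val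
    ((((volume : Measure (EuclideanSpace ℝ (Fin n))).toSphere) Set.univ)⁻¹ •
      (volume : Measure (EuclideanSpace ℝ (Fin n))).toSphere)

/-- The `Beta(a, b)` distribution on `[0,1]`, as a measure on `ℝ`. -/
noncomputable def betaMeas (a b : ℝ) : Measure ℝ :=
  volume.withDensity fun z =>
    ENNReal.ofReal (if 0 ≤ z ∧ z ≤ 1 then
      z ^ (a - 1) * (1 - z) ^ (b - 1) * (Real.Gamma (a + b) / (Real.Gamma a * Real.Gamma b))
    else 0)

instance betaMeas.instSigmaFinite (a b : ℝ) : SigmaFinite (betaMeas a b) := by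
  unfold betaMeas; infer_instance

theorem lintegral_image_eq_lintegral_abs_deriv_mul' {s : Set ℝ} {f f' : ℝ → ℝ}
    (hs : MeasurableSet s) (hf' : ∀ x ∈ s, HasDerivWithinAt f (f' x) s x)
    (hf : Set.InjOn f s) (g : ℝ → ENNReal) :
    ∫⁻ x in f '' s, g x = ∫⁻ x in s, ENNReal.ofReal |f' x| * g (f x) := by
  simpa only [ContinuousLinearMap.det_toSpanSingleton] using
    lintegral_image_eq_lintegral_abs_det_fderiv_mul volume hs
      (fun x hx => (hf' x hx).hasFDerivWithinAt) hf g

lemma measurable_epan (n : ℕ) : Measurable (epan n) := by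
  unfold epan
  exact Measurable.ite
    (measurableSet_lt ((continuous_norm.pow 2).measurable) measurable_const)
    (measurable_const.mul (measurable_const.sub ((continuous_norm.pow 2).measurable)))
    measurable_const

lemma betaMeas_compl_Ioo (a b : ℝ) : betaMeas a b (Set.Ioo (0:ℝ) 1)ᶜ = 0 := by
  rw [betaMeas, withDensity_apply _ measurableSet_Ioo.compl]
  have h0 : (volume : Measure ℝ) ({0, 1} : Set ℝ) = 0 := by
    rw [Set.insert_eq]
    exact measure_union_null (measure_singleton 0) (measure_singleton 1)
  rw [← lintegral_zero]
  refine lintegral_congr_ae ?_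
  filter_upwards [ae_restrict_mem measurableSet_Ioo.compl,
    ae_restrict_of_ae (μ := volume) (measure_eq_zero_iff_ae_notMem.mp h0)] with z hz hz01
  simp only [Set.mem_insert_iff, Set.mem_singleton_iff, not_or] at hz01
  have : ¬ (0 ≤ z ∧ z ≤ 1) := by
    rintro ⟨h0z, hz1⟩
    exact hz ⟨lt_of_le_of_ne h0z (Ne.symm hz01.1), lt_of_le_of_ne hz1 hz01.2⟩
  simp [this]

lemma unitBallVol_pos (n : ℕ) : 0 < unitBallVol n := by
  unfold unitBallVol
  apply div_pos (Real.rpow_pos_of_pos Real.pi_pos _)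
  exact Real.Gamma_pos_of_pos (by positivity)

lemma toSphere_univ_eq (n : ℕ) (hn : 1 ≤ n) :
    (volume : Measure (EuclideanSpace ℝ (Fin n))).toSphere Set.univ
      = ENNReal.ofReal ((n : ℝ) * unitBallVol n) := by
  haveI : Nonempty (Fin n) := ⟨⟨0, hn⟩⟩
  rw [Measure.toSphere_apply_univ, finrank_euclideanSpace_fin,
    EuclideanSpace.volume_ball, Fintype.card_fin]
  have h1 : Real.sqrt π ^ n = π ^ ((n : ℝ) / 2) := by
    rw [Real.sqrt_eq_rpow, ← Real.rpow_natCast (π ^ ((1:ℝ)/2)) n,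
      ← Real.rpow_mul Real.pi_pos.le]
    ring_nf
  rw [ENNReal.ofReal_one, one_pow, one_mul, h1]
  rw [← ENNReal.ofReal_natCast n, ← ENNReal.ofReal_mul (by positivity)]
  rfl

lemma key_real (n : ℕ) (hn : 1 ≤ n) (r : ℝ) (hr : 0 < r) :
    1 / ((n : ℝ) * unitBallVol n) *
      (2 * r / ((n : ℝ) + 4) *
        ((r ^ 2 / ((n : ℝ) + 4)) ^ ((n : ℝ) / 2 - 1) * (1 - r ^ 2 / ((n : ℝ) + 4)) ^ ((2:ℝ) - 1)
          * (Real.Gamma ((n : ℝ) / 2 + 2) / (Real.Gamma ((n : ℝ) / 2) * Real.Gamma 2))))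
    = r ^ (n - 1) *
        ((((n : ℝ) + 2) / (2 * unitBallVol n * ((n : ℝ) + 4) ^ (((n : ℝ) + 2) / 2)))
          * (((n : ℝ) + 4) - r ^ 2)) := by
  have hM : (0:ℝ) < (n : ℝ) + 4 := by positivity
  have hc := unitBallVol_pos n
  have hnR : (0:ℝ) < n := by exact_mod_cast hn
  have ha : ((n:ℝ)/2) ≠ 0 := by positivity
  have hG2 : Real.Gamma 2 = 1 := Real.Gamma_two
  have hGa : Real.Gamma ((n:ℝ)/2 + 2) = ((n:ℝ)/2 + 1) * ((n:ℝ)/2) * Real.Gamma ((n:ℝ)/2) := by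
    have e1 : (n:ℝ)/2 + 2 = ((n:ℝ)/2 + 1) + 1 := by ring
    rw [e1, Real.Gamma_add_one (by positivity), Real.Gamma_add_one ha]
    ring
  have hGpos : 0 < Real.Gamma ((n:ℝ)/2) := Real.Gamma_pos_of_pos (by positivity)
  have hone : (1 - r ^ 2 / ((n : ℝ) + 4)) ^ ((2:ℝ) - 1) = (((n:ℝ)+4) - r^2)/((n:ℝ)+4) := by
    norm_num
    field_simp
  have hdiv : (r ^ 2 / ((n : ℝ) + 4)) ^ ((n : ℝ) / 2 - 1)
      = r ^ ((n:ℝ) - 2) / ((n:ℝ)+4) ^ ((n:ℝ)/2 - 1) := by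
    rw [Real.div_rpow (by positivity) hM.le]
    congr 1
    rw [← Real.rpow_natCast r 2, ← Real.rpow_mul hr.le]
    congr 1
    push_cast
    ring
  have hrn : (r : ℝ) ^ (n - 1) = r ^ ((n:ℝ) - 2) * r := by
    rw [← Real.rpow_natCast r (n-1), ← Real.rpow_add_one hr.ne' ((n:ℝ)-2)]
    congr 1
    rw [Nat.cast_sub hn]
    push_cast; ring
  have hMexp : ((n:ℝ)+4) ^ (((n : ℝ) + 2) / 2)
      = ((n:ℝ)+4) ^ ((n:ℝ)/2 - 1) * ((n:ℝ)+4)^2 := by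
    rw [← Real.rpow_natCast ((n:ℝ)+4) 2, ← Real.rpow_add hM]
    congr 1
    push_cast; ring
  have hMe : (0:ℝ) < ((n:ℝ)+4) ^ ((n:ℝ)/2 - 1) := Real.rpow_pos_of_pos hM _
  rw [hone, hdiv, hrn, hMexp, hGa, hG2]
  field_simp

lemma inner_eq (n : ℕ) (hn : 1 ≤ n) {A : Set (EuclideanSpace ℝ (Fin n))} (hA : MeasurableSet A)
    (t : Metric.sphere (0 : EuclideanSpace ℝ (Fin n)) 1) :
    ((volume : Measure (EuclideanSpace ℝ (Fin n))).toSphere Set.univ)⁻¹ *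
      betaMeas ((n : ℝ) / 2) 2
        {z : ℝ | Real.sqrt (((n : ℝ) + 4) * z) • (t : EuclideanSpace ℝ (Fin n)) ∈ A}
    = ∫⁻ r in Set.Ioi (0 : ℝ),
        ENNReal.ofReal (r ^ (n - 1)) *
          Set.indicator A (fun x => ENNReal.ofReal (epan n x))
            (r • (t : EuclideanSpace ℝ (Fin n))) := by
  have hM : (0:ℝ) < (n:ℝ) + 4 := by positivity
  set M : ℝ := (n:ℝ) + 4 with hMdef
  set sM := Real.sqrt M with hsMdef
  have hsM0 : 0 < sM := Real.sqrt_pos.mpr hM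
  set βd : ℝ → ENNReal := fun z => ENNReal.ofReal (if 0 ≤ z ∧ z ≤ 1 then
      z ^ ((n:ℝ)/2 - 1) * (1 - z) ^ ((2:ℝ) - 1)
        * (Real.Gamma ((n:ℝ)/2 + 2) / (Real.Gamma ((n:ℝ)/2) * Real.Gamma 2))
    else 0) with hβd
  set S : Set ℝ := {z : ℝ | Real.sqrt (M * z) • (t : EuclideanSpace ℝ (Fin n)) ∈ A} with hSdef
  have hmS : MeasurableSet S := by
    have hc : Continuous fun z : ℝ => Real.sqrt (M * z) • (t : EuclideanSpace ℝ (Fin n)) := by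
      fun_prop
    exact hc.measurable hA
  -- beta measure as integral over S ∩ Ioo 0 1
  have hβ : betaMeas ((n:ℝ)/2) 2 S = ∫⁻ z in S ∩ Set.Ioo 0 1, βd z := by
    rw [← measure_inter_conull (betaMeas_compl_Ioo _ _), betaMeas,
      withDensity_apply _ (hmS.inter measurableSet_Ioo)]
  -- change of variables z = r^2 / M
  have himg : Set.Ioo (0:ℝ) 1 = (fun r : ℝ => r ^ 2 / M) '' Set.Ioo 0 sM := by
    ext z
    constructor
    · rintro ⟨hz0, hz1⟩
      refine ⟨Real.sqrt (M * z), ⟨Real.sqrt_pos.mpr (by positivity), ?_⟩, ?_⟩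
      · rw [hsMdef]
        exact Real.sqrt_lt_sqrt (by positivity) (by nlinarith)
      · show Real.sqrt (M * z) ^ 2 / M = z
        rw [Real.sq_sqrt (by positivity)]
        field_simp
    · rintro ⟨r, ⟨hr0, hrM⟩, rfl⟩
      constructor
      · positivity
      · rw [div_lt_one hM]
        have := (Real.lt_sqrt hr0.le).mp hrM
        linarith [this]
  have hderiv : ∀ r ∈ Set.Ioo (0:ℝ) sM,
      HasDerivWithinAt (fun r : ℝ => r ^ 2 / M) (2 * r / M) (Set.Ioo 0 sM) r := by
    intro r _
    have := ((hasDerivAt_pow 2 r).div_const M).hasDerivWithinAt (s := Set.Ioo (0:ℝ) sM)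
    simpa using this
  have hinj : Set.InjOn (fun r : ℝ => r ^ 2 / M) (Set.Ioo 0 sM) := by
    intro a ha b hb hab
    simp only at hab
    have h2 : a ^ 2 = b ^ 2 := by
      field_simp at hab
      exact hab
    calc a = Real.sqrt (a ^ 2) := (Real.sqrt_sq ha.1.le).symm
    _ = Real.sqrt (b ^ 2) := by rw [h2]
    _ = b := Real.sqrt_sq hb.1.le
  have hcov : ∫⁻ z in S ∩ Set.Ioo 0 1, βd z
      = ∫⁻ r in Set.Ioo 0 sM,
          ENNReal.ofReal |2 * r / M| * Set.indicator S βd (r ^ 2 / M) := by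
    have h1 : ∫⁻ z in S ∩ Set.Ioo 0 1, βd z
        = ∫⁻ z in Set.Ioo 0 1, Set.indicator S βd z := by
      rw [lintegral_indicator hmS, Measure.restrict_restrict hmS]
    rw [h1, himg,
      lintegral_image_eq_lintegral_abs_deriv_mul' measurableSet_Ioo hderiv hinj]
  -- rewrite as integral over Ioi 0
  have hc0 : (volume : Measure (EuclideanSpace ℝ (Fin n))).toSphere Set.univ
      = ENNReal.ofReal ((n : ℝ) * unitBallVol n) := toSphere_univ_eq n hn
  have hnubv : (0:ℝ) < (n : ℝ) * unitBallVol n := by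
    have := unitBallVol_pos n
    have hnR : (0:ℝ) < n := by exact_mod_cast hn
    positivity
  have hcne : ((volume : Measure (EuclideanSpace ℝ (Fin n))).toSphere Set.univ)⁻¹ ≠ ⊤ := by
    rw [hc0]
    exact ENNReal.inv_ne_top.mpr (ENNReal.ofReal_pos.mpr hnubv).ne'
  have hIoo : ∫⁻ r in Set.Ioo 0 sM,
        ENNReal.ofReal |2 * r / M| * Set.indicator S βd (r ^ 2 / M)
      = ∫⁻ r in Set.Ioi 0, Set.indicator (Set.Ioo 0 sM)
          (fun r => ENNReal.ofReal |2 * r / M| * Set.indicator S βd (r ^ 2 / M)) r := by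
    rw [lintegral_indicator measurableSet_Ioo, Measure.restrict_restrict measurableSet_Ioo,
      Set.inter_eq_left.mpr (Set.Ioo_subset_Ioi_self)]
  rw [hβ, hcov, hIoo, ← lintegral_const_mul' _ _ hcne]
  refine setLIntegral_congr_fun measurableSet_Ioi (fun r hr => ?_)
  have hr0 : (0:ℝ) < r := hr
  have hnorm : ‖r • (t : EuclideanSpace ℝ (Fin n))‖ = r := by
    rw [norm_smul, mem_sphere_zero_iff_norm.mp t.2, mul_one, Real.norm_eq_abs, abs_of_pos hr0]
  have hmemS : (r ^ 2 / M ∈ S) ↔ r • (t : EuclideanSpace ℝ (Fin n)) ∈ A := by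
    rw [hSdef]
    simp only [Set.mem_setOf_eq]
    have : M * (r ^ 2 / M) = r ^ 2 := by field_simp
    rw [this, Real.sqrt_sq hr0.le]
  by_cases hrA : r • (t : EuclideanSpace ℝ (Fin n)) ∈ A
  · rw [Set.indicator_of_mem hrA]
    by_cases h2 : r ^ 2 < M
    · have hrIoo : r ∈ Set.Ioo (0:ℝ) sM := ⟨hr0, (Real.lt_sqrt hr0.le).mpr h2⟩
      rw [Set.indicator_of_mem hrIoo, Set.indicator_of_mem (hmemS.mpr hrA)]
      have hcond : 0 ≤ r ^ 2 / M ∧ r ^ 2 / M ≤ 1 :=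
        ⟨by positivity, (div_le_one hM).mpr h2.le⟩
      have hepan : epan n (r • (t : EuclideanSpace ℝ (Fin n)))
          = (((n : ℝ) + 2) / (2 * unitBallVol n * M ^ (((n : ℝ) + 2) / 2))) * (M - r ^ 2) := by
        rw [epan, if_pos (by rw [hnorm]; exact h2), hnorm]
      rw [hβd]
      simp only [if_pos hcond]
      rw [hepan, hc0, ← ENNReal.ofReal_inv_of_pos hnubv,
        abs_of_nonneg (by positivity : (0:ℝ) ≤ 2 * r / M),
        ← ENNReal.ofReal_mul (by positivity),
        ← ENNReal.ofReal_mul (by positivity),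
        ← ENNReal.ofReal_mul (by positivity)]
      congr 1
      have := key_real n hn r hr0
      rw [hMdef]
      rw [one_div] at this
      linarith [this]
    · have hrIoo : r ∉ Set.Ioo (0:ℝ) sM := by
        intro hmem
        exact h2 ((Real.lt_sqrt hr0.le).mp hmem.2)
      rw [Set.indicator_of_notMem hrIoo, mul_zero]
      have hepan : epan n (r • (t : EuclideanSpace ℝ (Fin n))) = 0 := by
        rw [epan, if_neg (by rw [hnorm]; exact h2)]
      rw [hepan]
      simp
  · rw [Set.indicator_of_notMem hrA, mul_zero]
    by_cases hrIoo : r ∈ Set.Ioo (0:ℝ) sM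
    · rw [Set.indicator_of_mem hrIoo, Set.indicator_of_notMem (fun h => hrA (hmemS.mp h)),
        mul_zero, mul_zero]
    · rw [Set.indicator_of_notMem hrIoo, mul_zero]


/-- If `T` is uniform on the unit sphere `S^(n-1)` and `η ~ Beta(n/2, 2)` is independent of
`T`, then `ε = √((n+4)η) • T` has the Epanechnikov density `𝓔`. -/
theorem epan_sampling {Ω : Type*} [MeasurableSpace Ω] (P : Measure Ω) [IsProbabilityMeasure P]
    (n : ℕ) (hn : 1 ≤ n) (T : Ω → EuclideanSpace ℝ (Fin n)) (η : Ω → ℝ)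
    (hT : Measurable T) (hη : Measurable η)
    (hTd : Measure.map T P = sphereUniform n)
    (hηd : Measure.map η P = betaMeas ((n : ℝ) / 2) 2)
    (hind : ProbabilityTheory.IndepFun T η P) :
    Measure.map (fun ω => Real.sqrt (((n : ℝ) + 4) * η ω) • T ω) P
      = volume.withDensity fun x => ENNReal.ofReal (epan n x) := by
  haveI : Nontrivial (EuclideanSpace ℝ (Fin n)) := by
    refine Module.nontrivial_of_finrank_pos (R := ℝ) ?_
    rw [finrank_euclideanSpace_fin]
    exact hn
  have hgc : Continuous (fun p : EuclideanSpace ℝ (Fin n) × ℝ =>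
      Real.sqrt (((n : ℝ) + 4) * p.2) • p.1) := by fun_prop
  have hg : Measurable (fun p : EuclideanSpace ℝ (Fin n) × ℝ =>
      Real.sqrt (((n : ℝ) + 4) * p.2) • p.1) := hgc.measurable
  have hpair : Measure.map (fun ω => (T ω, η ω)) P
      = (sphereUniform n).prod (betaMeas ((n : ℝ) / 2) 2) := by
    rw [← hTd, ← hηd]
    exact (ProbabilityTheory.indepFun_iff_map_prod_eq_prod_map_map
      hT.aemeasurable hη.aemeasurable).mp hind
  have hcomp : (fun ω => Real.sqrt (((n : ℝ) + 4) * η ω) • T ω)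
      = (fun p : EuclideanSpace ℝ (Fin n) × ℝ => Real.sqrt (((n : ℝ) + 4) * p.2) • p.1)
        ∘ (fun ω => (T ω, η ω)) := rfl
  rw [hcomp, ← Measure.map_map hg (hT.prodMk hη), hpair]
  refine Measure.ext fun A hA => ?_
  rw [Measure.map_apply hg hA, withDensity_apply _ hA]
  -- LHS : decompose as iterated integral over the sphere
  rw [Measure.prod_apply (hg hA), sphereUniform,
    lintegral_map (measurable_measure_prodMk_left (hg hA)) measurable_subtype_coe,
    lintegral_smul_measure]
  -- RHS : polar coordinates
  set F : EuclideanSpace ℝ (Fin n) → ENNReal :=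
    A.indicator (fun x => ENNReal.ofReal (epan n x)) with hF
  have hFm : Measurable F := ((measurable_epan n).ennreal_ofReal).indicator hA
  have hrhs : ∫⁻ x in A, ENNReal.ofReal (epan n x) ∂(volume)
      = ∫⁻ t, (∫⁻ r in Set.Ioi (0:ℝ),
            ENNReal.ofReal (r ^ (n - 1)) * F (r • (t : EuclideanSpace ℝ (Fin n))))
          ∂(volume : Measure (EuclideanSpace ℝ (Fin n))).toSphere := by
    have mp := (volume : Measure (EuclideanSpace ℝ (Fin n))).measurePreserving_homeomorphUnitSphereProd
    have hsm : Measurable fun p : Metric.sphere (0 : EuclideanSpace ℝ (Fin n)) 1 × Set.Ioi (0:ℝ) =>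
        F ((p.2 : ℝ) • (p.1 : EuclideanSpace ℝ (Fin n))) := by
      apply hFm.comp
      have : Continuous fun p : Metric.sphere (0 : EuclideanSpace ℝ (Fin n)) 1 × Set.Ioi (0:ℝ) =>
          (p.2 : ℝ) • (p.1 : EuclideanSpace ℝ (Fin n)) := by fun_prop
      exact this.measurable
    calc ∫⁻ x in A, ENNReal.ofReal (epan n x) ∂(volume)
        = ∫⁻ x, F x ∂(volume : Measure (EuclideanSpace ℝ (Fin n))) :=
          (lintegral_indicator hA _).symm
      _ = ∫⁻ x in ({0}ᶜ : Set (EuclideanSpace ℝ (Fin n))), F x ∂volume := by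
          rw [MeasureTheory.restrict_compl_singleton]
      _ = ∫⁻ x : ({0}ᶜ : Set (EuclideanSpace ℝ (Fin n))), F x
            ∂((volume : Measure (EuclideanSpace ℝ (Fin n))).comap Subtype.val) := by
          rw [lintegral_subtype_comap (measurableSet_singleton 0).compl]
      _ = ∫⁻ p, F ((p.2 : ℝ) • (p.1 : EuclideanSpace ℝ (Fin n)))
            ∂((volume : Measure (EuclideanSpace ℝ (Fin n))).toSphere.prod
              (Measure.volumeIoiPow (Module.finrank ℝ (EuclideanSpace ℝ (Fin n)) - 1))) := by
          rw [← mp.lintegral_comp hsm]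
          refine lintegral_congr fun x => ?_
          congr 1
          have := congrArg Subtype.val
            ((homeomorphUnitSphereProd (EuclideanSpace ℝ (Fin n))).symm_apply_apply x)
          rw [← this]
          rw [homeomorphUnitSphereProd_symm_apply_coe]
      _ = ∫⁻ t, (∫⁻ r : Set.Ioi (0:ℝ), F ((r : ℝ) • (t : EuclideanSpace ℝ (Fin n)))
              ∂(Measure.volumeIoiPow (Module.finrank ℝ (EuclideanSpace ℝ (Fin n)) - 1)))
            ∂(volume : Measure (EuclideanSpace ℝ (Fin n))).toSphere := by
          rw [MeasureTheory.lintegral_prod _ hsm.aemeasurable]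
      _ = ∫⁻ t, (∫⁻ r in Set.Ioi (0:ℝ),
              ENNReal.ofReal (r ^ (n - 1)) * F (r • (t : EuclideanSpace ℝ (Fin n))))
            ∂(volume : Measure (EuclideanSpace ℝ (Fin n))).toSphere := by
          refine lintegral_congr fun t => ?_
          rw [Measure.volumeIoiPow, finrank_euclideanSpace_fin]
          rw [lintegral_withDensity_eq_lintegral_mul _
            (by exact (measurable_subtype_coe.pow_const _).ennreal_ofReal)
            (by
              apply hFm.comp
              have : Continuous fun r : Set.Ioi (0:ℝ) =>
                  (r : ℝ) • (t : EuclideanSpace ℝ (Fin n)) := by fun_prop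
              exact this.measurable)]
          simp only [Pi.mul_apply]
          rw [← lintegral_subtype_comap measurableSet_Ioi
            (fun r : ℝ => ENNReal.ofReal (r ^ (n - 1)) * F (r • (t : EuclideanSpace ℝ (Fin n))))]
  rw [hrhs]
  -- reduce to the per-point identity on the sphere
  have hcne : ((volume : Measure (EuclideanSpace ℝ (Fin n))).toSphere Set.univ)⁻¹ ≠ ⊤ := by
    rw [toSphere_univ_eq n hn]
    have hnubv : (0:ℝ) < (n : ℝ) * unitBallVol n := by
      have := unitBallVol_pos n
      have hnR : (0:ℝ) < n := by exact_mod_cast hn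
      positivity
    exact ENNReal.inv_ne_top.mpr (ENNReal.ofReal_pos.mpr hnubv).ne'
  rw [smul_eq_mul, ← lintegral_const_mul' _ _ hcne]
  refine lintegral_congr fun t => ?_
  exact inner_eq n hn hA t
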